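/- Let n ≥ 1 and consider ES_m(K^n_d) = ∑_{j=1}^{m} ∏_{i=1}^{j-1} (n−i−d)/(n−i) for the disjoint union of n/(d+1) cliques of size d+1. This closed form satisfies ES_m(K^n_d) = (n/(d+1)) · (1 − ∏_{i=1}^{m} (n−d−i)/(n+1−i)) for all 1 ≤ m ≤ n − d. -/

import Mathlib

lemma key17 (x : ℝ) (m : ℕ) :
    (∏ i ∈ Finset.Icc 1 m, (x - i)) * x
      = (∏ i ∈ Finset.Icc 1 m, (x + 1 - i)) * (x - m) := by
  induction m with
  | zero => simp
  | succ k ih =>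
    rw [Finset.prod_Icc_succ_top (by omega), Finset.prod_Icc_succ_top (by omega)]
    push_cast
    push_cast at ih
    linear_combination (x - (k + 1)) * ih

/-- Closed form for `ES_m(K^n_d)`:
`∑_{j=1}^m ∏_{i=1}^{j-1} (n−i−d)/(n−i) = (n/(d+1))·(1 − ∏_{i=1}^m (n−d−i)/(n+1−i))`. -/
theorem stmt17 (n d m : ℕ) (hn : 1 ≤ n) (hdvd : (d + 1) ∣ n) (hdn : d + 1 ≤ n)
    (hm1 : 1 ≤ m) (hm : m ≤ n - d) :
    ∑ j ∈ Finset.Icc 1 m, ∏ i ∈ Finset.Icc 1 (j - 1),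
        (((n:ℝ) - i - d) / ((n:ℝ) - i))
    = ((n : ℝ) / ((d : ℝ) + 1))
      * (1 - ∏ i ∈ Finset.Icc 1 m, (((n:ℝ) - d - i) / ((n:ℝ) + 1 - i))) := by
  have hn0 : (n : ℝ) ≠ 0 := by positivity
  have hd0 : (d : ℝ) + 1 ≠ 0 := by positivity
  revert hm
  induction m, hm1 using Nat.le_induction with
  | base =>
    intro hm
    simp only [Finset.Icc_self, Finset.sum_singleton, Nat.sub_self,
      Finset.Icc_eq_empty_of_lt (by omega : (1:ℕ) > 0), Finset.prod_empty]
    rw [Finset.prod_singleton]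
    push_cast
    field_simp
    ring_nf
    field_simp
    ring
  | succ m hm1 ih =>
    intro hm
    have hmn : m + 1 ≤ n - d := hm
    have hmlt : m < n := by omega
    have hB : (∏ i ∈ Finset.Icc 1 m, ((n:ℝ) - i)) ≠ 0 := by
      rw [Finset.prod_ne_zero_iff]
      intro i hi
      simp only [Finset.mem_Icc] at hi
      have : i < n := by omega
      have : (i : ℝ) < n := by exact_mod_cast this
      intro h; nlinarith
    have hC : (∏ i ∈ Finset.Icc 1 m, ((n:ℝ) + 1 - i)) ≠ 0 := by
      rw [Finset.prod_ne_zero_iff]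
      intro i hi
      simp only [Finset.mem_Icc] at hi
      have : i < n + 1 := by omega
      have : (i : ℝ) < n + 1 := by exact_mod_cast this
      intro h; nlinarith
    have hnm : (n : ℝ) - m ≠ 0 := by
      have : (m : ℝ) < n := by exact_mod_cast hmlt
      intro h; nlinarith
    rw [Finset.sum_Icc_succ_top (by omega : 1 ≤ m + 1), ih (by omega),
      Finset.prod_Icc_succ_top (by omega : 1 ≤ m + 1)]
    simp only [Nat.add_sub_cancel]
    have hterm : ∏ x ∈ Finset.Icc 1 m, (((n:ℝ) - x - d) / ((n:ℝ) - x))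
        = (∏ i ∈ Finset.Icc 1 m, ((n:ℝ) - d - i)) / ∏ i ∈ Finset.Icc 1 m, ((n:ℝ) - i) := by
      rw [← Finset.prod_div_distrib]
      exact Finset.prod_congr rfl (fun i _ => by ring)
    rw [hterm, Finset.prod_div_distrib]
    have hkey := key17 (n : ℝ) m
    set A := ∏ i ∈ Finset.Icc 1 m, ((n:ℝ) - d - i) with hA
    set B := ∏ i ∈ Finset.Icc 1 m, ((n:ℝ) - i) with hBdef
    set C := ∏ i ∈ Finset.Icc 1 m, ((n:ℝ) + 1 - i) with hCdef
    have h2 : A / B = ((n:ℝ) * A) / (C * ((n:ℝ) - m)) := by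
      rw [div_eq_div_iff hB (mul_ne_zero hC hnm)]
      linear_combination (-A) * hkey
    rw [h2]
    push_cast
    have h3 : (n:ℝ) + 1 - ((m:ℝ) + 1) = (n:ℝ) - m := by ring
    rw [h3]
    field_simp
    ring
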